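/- Translation into de Bruijn form is injective on α-equivalence classes: for formulas A and B of the nominal syntax, trans_fm [] A = trans_fm [] B if and only if A = B (as α-equivalence classes). -/

import Mathlib

/-- Terms of the language of hereditarily finite set theory. -/
inductive Tm : Type where
  | Zero : Tm
  | Var : ℕ → Tm
  | Eats : Tm → Tm → Tm

/-- Formulas of the language of HF set theory (named-variable syntax). -/
inductive Fm : Type where
  | Mem : Tm → Tm → Fm
  | Eq : Tm → Tm → Fm
  | Disj : Fm → Fm → Fm
  | Neg : Fm → Fm
  | Ex : ℕ → Fm → Fm

/-- Substitution of a term for a variable in a term. -/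
def substTm (i : ℕ) (x : Tm) : Tm → Tm
  | .Zero => .Zero
  | .Var k => if i = k then x else .Var k
  | .Eats t u => .Eats (substTm i x t) (substTm i x u)

/-- Substitution of a term for a variable in a formula. -/
def substFm (i : ℕ) (x : Tm) : Fm → Fm
  | .Mem t u => .Mem (substTm i x t) (substTm i x u)
  | .Eq t u => .Eq (substTm i x t) (substTm i x u)
  | .Disj A B => .Disj (substFm i x A) (substFm i x B)
  | .Neg A => .Neg (substFm i x A)
  | .Ex k A => if i = k then .Ex k A else .Ex k (substFm i x A)

/-- Free variables of a term. -/
def fvTm : Tm → Finset ℕ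
  | .Zero => ∅
  | .Var k => {k}
  | .Eats t u => fvTm t ∪ fvTm u

/-- Free variables of a formula. -/
def fvFm : Fm → Finset ℕ
  | .Mem t u => fvTm t ∪ fvTm u
  | .Eq t u => fvTm t ∪ fvTm u
  | .Disj A B => fvFm A ∪ fvFm B
  | .Neg A => fvFm A
  | .Ex k A => fvFm A \ {k}

/-- All variables (free or bound) occurring in a formula. -/
def varsFm : Fm → Finset ℕ
  | .Mem t u => fvTm t ∪ fvTm u
  | .Eq t u => fvTm t ∪ fvTm u
  | .Disj A B => varsFm A ∪ varsFm B
  | .Neg A => varsFm A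
  | .Ex k A => insert k (varsFm A)

/-- Derived connectives. -/
def fmImp (A B : Fm) : Fm := .Disj (.Neg A) B
def fmConj (A B : Fm) : Fm := .Neg (.Disj (.Neg A) (.Neg B))
def fmIff (A B : Fm) : Fm := fmConj (fmImp A B) (fmImp B A)
def fmAll (i : ℕ) (A : Fm) : Fm := .Neg (.Ex i (.Neg A))
def fmAll2 (i : ℕ) (t : Tm) (A : Fm) : Fm := fmAll i (fmImp (.Mem (.Var i) t) A)

/-- Falsehood: `0 ∈ 0`. -/
def fmFls : Fm := .Mem .Zero .Zero

/-- The subset relation `t ⊆ u`, via a bounded universal quantifier with a fresh variable. -/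
def SubsetFm (t u : Tm) : Fm :=
  fmAll2 (((fvTm t ∪ fvTm u).sup id) + 1) t (.Mem (.Var (((fvTm t ∪ fvTm u).sup id) + 1)) u)

/-- Sentential (boolean) axioms. -/
inductive BoolAx : Fm → Prop where
  | ident (A) : BoolAx (fmImp A A)
  | disjI1 (A B) : BoolAx (fmImp A (.Disj A B))
  | disjCont (A) : BoolAx (fmImp (.Disj A A) A)
  | disjAssoc (A B C) : BoolAx (fmImp (.Disj A (.Disj B C)) (.Disj (.Disj A B) C))
  | disjConj (A B C) : BoolAx (fmImp (.Disj C A) (fmImp (.Disj (.Neg C) B) (.Disj A B)))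

/-- Equality axioms. -/
def EqAx (A : Fm) : Prop :=
  A = .Eq (.Var 1) (.Var 1) ∨
  A = fmImp (fmConj (.Eq (.Var 1) (.Var 2)) (.Eq (.Var 3) (.Var 4)))
        (fmImp (.Eq (.Var 1) (.Var 3)) (.Eq (.Var 2) (.Var 4))) ∨
  A = fmImp (fmConj (.Eq (.Var 1) (.Var 2)) (.Eq (.Var 3) (.Var 4)))
        (fmImp (.Mem (.Var 1) (.Var 3)) (.Mem (.Var 2) (.Var 4))) ∨
  A = fmImp (fmConj (.Eq (.Var 1) (.Var 2)) (.Eq (.Var 3) (.Var 4)))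
        (.Eq (.Eats (.Var 1) (.Var 3)) (.Eats (.Var 2) (.Var 4)))

/-- Specialisation axioms `A(i := x) → ∃i A`. -/
inductive SpecAx : Fm → Prop where
  | I (i : ℕ) (x : Tm) (A : Fm) : SpecAx (fmImp (substFm i x A) (.Ex i A))

/-- HF1: `z = 0 ↔ ∀x, x ∉ z`. -/
def HF1fm : Fm :=
  fmIff (.Eq (.Var 0) .Zero) (fmAll 1 (.Neg (.Mem (.Var 1) (.Var 0))))

/-- HF2: `z = x ◁ y ↔ ∀u, u ∈ z ↔ u ∈ x ∨ u = y`. -/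
def HF2fm : Fm :=
  fmIff (.Eq (.Var 0) (.Eats (.Var 1) (.Var 2)))
    (fmAll 3 (fmIff (.Mem (.Var 3) (.Var 0))
      (.Disj (.Mem (.Var 3) (.Var 1)) (.Eq (.Var 3) (.Var 2)))))

def HFAx (A : Fm) : Prop := A = HF1fm ∨ A = HF2fm

/-- The induction axiom scheme HF3. -/
inductive IndAx : Fm → Prop where
  | ind (i j : ℕ) (A : Fm) : j ≠ i → j ∉ fvFm A →
      IndAx (fmImp (substFm i .Zero A)
        (fmImp (fmAll i (fmAll j (fmImp A (fmImp (substFm i (.Var j) A)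
              (substFm i (.Eats (.Var i) (.Var j)) A)))))
          (fmAll i A)))

/-- The (sequent-style) HF calculus `H ⊢ A`. -/
inductive Thm : Set Fm → Fm → Prop where
  | hyp {H A} : A ∈ H → Thm H A
  | bool {H A} : BoolAx A → Thm H A
  | eq {H A} : EqAx A → Thm H A
  | spec {H A} : SpecAx A → Thm H A
  | hf {H A} : HFAx A → Thm H A
  | ind {H A} : IndAx A → Thm H A
  | mp {H H' A B} : Thm H (fmImp A B) → Thm H' A → Thm (H ∪ H') B
  | exi {H A B i} : Thm H (fmImp A B) → i ∉ fvFm B → (∀ C ∈ H, i ∉ fvFm C) →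
      Thm H (fmImp (.Ex i A) B)

/-- The standard model of HF set theory: natural numbers with Ackermann membership. -/
def memN (x y : ℕ) : Prop := Nat.testBit y x = true

/-- Evaluation of terms in the standard model, relative to an environment. -/
def evalTm (e : ℕ → ℕ) : Tm → ℕ
  | .Zero => 0
  | .Var k => e k
  | .Eats t u => evalTm e t ||| 2 ^ evalTm e u

/-- Evaluation (truth) of formulas in the standard model. -/
def evalFm (e : ℕ → ℕ) : Fm → Prop
  | .Mem t u => memN (evalTm e t) (evalTm e u)
  | .Eq t u => evalTm e t = evalTm e u
  | .Disj A B => evalFm e A ∨ evalFm e B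
  | .Neg A => ¬ evalFm e A
  | .Ex k A => ∃ x : ℕ, evalFm (Function.update e k x) A

/-- The null environment. -/
def e0 : ℕ → ℕ := fun _ => 0

/-- Strict Σ formulas. -/
inductive SsFm : Fm → Prop where
  | mem (i j : ℕ) : SsFm (.Mem (.Var i) (.Var j))
  | disj {A B} : SsFm A → SsFm B → SsFm (.Disj A B)
  | conj {A B} : SsFm A → SsFm B → SsFm (fmConj A B)
  | ex {A} (i : ℕ) : SsFm A → SsFm (.Ex i A)
  | all2 {A} (i j : ℕ) : SsFm A → j ≠ i → j ∉ fvFm A → SsFm (fmAll2 i (.Var j) A)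

/-- Σ formulas: provably equivalent to a strict Σ formula with no new free variables. -/
def SigmaFm (A : Fm) : Prop :=
  ∃ B, SsFm B ∧ fvFm B ⊆ fvFm A ∧ Thm ∅ (fmIff A B)

/-- α-equivalence of formulas. -/
inductive AEq : Fm → Fm → Prop where
  | mem (t u) : AEq (.Mem t u) (.Mem t u)
  | eq (t u) : AEq (.Eq t u) (.Eq t u)
  | disj {A A' B B'} : AEq A A' → AEq B B' → AEq (.Disj A B) (.Disj A' B')
  | neg {A A'} : AEq A A' → AEq (.Neg A) (.Neg A')
  | ex {A B} (i j : ℕ) :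
      (∀ k, k ∉ varsFm A → k ∉ varsFm B → k ≠ i → k ≠ j →
        AEq (substFm i (.Var k) A) (substFm j (.Var k) B)) →
      AEq (.Ex i A) (.Ex j B)

/-- De Bruijn terms. -/
inductive DbTm : Type where
  | DBZero : DbTm
  | DBVar : ℕ → DbTm
  | DBInd : ℕ → DbTm
  | DBEats : DbTm → DbTm → DbTm

/-- De Bruijn formulas. -/
inductive DbFm : Type where
  | DBMem : DbTm → DbTm → DbFm
  | DBEq : DbTm → DbTm → DbFm
  | DBDisj : DbFm → DbFm → DbFm
  | DBNeg : DbFm → DbFm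
  | DBEx : DbFm → DbFm

/-- Lookup of a name in a list of bound names, innermost first. -/
def lookup : List ℕ → ℕ → ℕ → DbTm
  | [], _, x => .DBVar x
  | y :: ys, n, x => if x = y then .DBInd n else lookup ys (n+1) x

/-- Translation of a term into de Bruijn form. -/
def transTm (e : List ℕ) : Tm → DbTm
  | .Zero => .DBZero
  | .Var k => lookup e 0 k
  | .Eats t u => .DBEats (transTm e t) (transTm e u)

/-- Translation of a formula into de Bruijn form. -/
def transFm (e : List ℕ) : Fm → DbFm
  | .Mem t u => .DBMem (transTm e t) (transTm e u)
  | .Eq t u => .DBEq (transTm e t) (transTm e u)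
  | .Disj A B => .DBDisj (transFm e A) (transFm e B)
  | .Neg A => .DBNeg (transFm e A)
  | .Ex k A => .DBEx (transFm (k :: e) A)

/-- Abstraction of a de Bruijn term over a name, at binding depth `k`. -/
def abstDbTm (v : ℕ) (k : ℕ) : DbTm → DbTm
  | .DBZero => .DBZero
  | .DBVar n => if n = v then .DBInd k else .DBVar n
  | .DBInd j => .DBInd j
  | .DBEats t u => .DBEats (abstDbTm v k t) (abstDbTm v k u)

/-- Abstraction of a de Bruijn formula over a name. -/
def abstDbFm (v : ℕ) (k : ℕ) : DbFm → DbFm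
  | .DBMem t u => .DBMem (abstDbTm v k t) (abstDbTm v k u)
  | .DBEq t u => .DBEq (abstDbTm v k t) (abstDbTm v k u)
  | .DBDisj A B => .DBDisj (abstDbFm v k A) (abstDbFm v k B)
  | .DBNeg A => .DBNeg (abstDbFm v k A)
  | .DBEx A => .DBEx (abstDbFm v (k+1) A)

/-- Well-formed de Bruijn terms (no indices at all). -/
inductive WfDbTm : DbTm → Prop where
  | zero : WfDbTm .DBZero
  | var (n : ℕ) : WfDbTm (.DBVar n)
  | eats {t u} : WfDbTm t → WfDbTm u → WfDbTm (.DBEats t u)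

/-- Well-formed de Bruijn formulas. -/
inductive WfDbFm : DbFm → Prop where
  | mem {t u} : WfDbTm t → WfDbTm u → WfDbFm (.DBMem t u)
  | eq {t u} : WfDbTm t → WfDbTm u → WfDbFm (.DBEq t u)
  | disj {A B} : WfDbFm A → WfDbFm B → WfDbFm (.DBDisj A B)
  | neg {A} : WfDbFm A → WfDbFm (.DBNeg A)
  | ex {A} (v : ℕ) : WfDbFm A → WfDbFm (.DBEx (abstDbFm v 0 A))

/-- Singleton `{x}` in the Ackermann model. -/
def singN (x : ℕ) : ℕ := 2 ^ x
/-- Unordered pair `{x, y}`. -/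
def upairN (x y : ℕ) : ℕ := 2 ^ x ||| 2 ^ y
/-- Kuratowski ordered pair `⟨x, y⟩ = {{x}, {x,y}}`. -/
def hpairN (x y : ℕ) : ℕ := upairN (singN x) (upairN x y)
/-- Von Neumann ordinals. -/
def ordN : ℕ → ℕ
  | 0 => 0
  | n+1 => ordN n ||| 2 ^ (ordN n)
/-- `htupleN n` is an `(n+2)`-tuple of zeros (right-nested pairs). -/
def htupleN : ℕ → ℕ
  | 0 => hpairN 0 0
  | n+1 => hpairN 0 (htupleN n)

/-- Gödel coding of de Bruijn terms by HF sets. -/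
def quotDbTm : DbTm → ℕ
  | .DBZero => 0
  | .DBVar n => ordN (n+1)
  | .DBInd k => hpairN (htupleN 6) (ordN k)
  | .DBEats t u => hpairN (htupleN 1) (hpairN (quotDbTm t) (quotDbTm u))

/-- Gödel coding of de Bruijn formulas by HF sets. -/
def quotDbFm : DbFm → ℕ
  | .DBMem t u => hpairN (htupleN 0) (hpairN (quotDbTm t) (quotDbTm u))
  | .DBEq t u => hpairN (htupleN 2) (hpairN (quotDbTm t) (quotDbTm u))
  | .DBDisj A B => hpairN (htupleN 3) (hpairN (quotDbFm A) (quotDbFm B))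
  | .DBNeg A => hpairN (htupleN 4) (quotDbFm A)
  | .DBEx A => hpairN (htupleN 5) (quotDbFm A)

/-- The code (as an HF set) of a term / of a formula. -/
def codeTmN (t : Tm) : ℕ := quotDbTm (transTm [] t)
def codeFmN (A : Fm) : ℕ := quotDbFm (transFm [] A)

/-- HF-term constructors for pairs, ordinals, tuples: the quotation `⌜·⌝` as a term. -/
def HPairT (x y : Tm) : Tm :=
  .Eats (.Eats .Zero (.Eats .Zero x)) (.Eats (.Eats .Zero x) y)
def OrdOfT : ℕ → Tm
  | 0 => .Zero
  | n+1 => .Eats (OrdOfT n) (OrdOfT n)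
def HTupleT : ℕ → Tm
  | 0 => HPairT .Zero .Zero
  | n+1 => HPairT .Zero (HTupleT n)

def quotDbTmT : DbTm → Tm
  | .DBZero => .Zero
  | .DBVar n => OrdOfT (n+1)
  | .DBInd k => HPairT (HTupleT 6) (OrdOfT k)
  | .DBEats t u => HPairT (HTupleT 1) (HPairT (quotDbTmT t) (quotDbTmT u))

def quotDbFmT : DbFm → Tm
  | .DBMem t u => HPairT (HTupleT 0) (HPairT (quotDbTmT t) (quotDbTmT u))
  | .DBEq t u => HPairT (HTupleT 2) (HPairT (quotDbTmT t) (quotDbTmT u))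
  | .DBDisj A B => HPairT (HTupleT 3) (HPairT (quotDbFmT A) (quotDbFmT B))
  | .DBNeg A => HPairT (HTupleT 4) (quotDbFmT A)
  | .DBEx A => HPairT (HTupleT 5) (quotDbFmT A)

/-- The Gödel-code term `⌜t⌝` of a term, and `⌜A⌝` of a formula. -/
def qTm (t : Tm) : Tm := quotDbTmT (transTm [] t)
def qFm (A : Fm) : Tm := quotDbFmT (transFm [] A)

/-- `Q_Imp x y`: the HF term constructing the code of an implication
(implication `A → B` being `¬A ∨ B`). -/
def QImp (x y : Tm) : Tm := HPairT (HTupleT 3) (HPairT (HPairT (HTupleT 4) x) y)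

/-- The shadow provability predicate: `x` is the code of a theorem. -/
def PfShadow (x : ℕ) : Prop := ∃ A : Fm, x = codeFmN A ∧ Thm ∅ A

/-- `Pf` is a provability predicate: a Σ formula with only the free variable `0`
whose standard semantics is provability of the coded formula. -/
def IsProvabilityPred (Pf : Fm) : Prop :=
  SigmaFm Pf ∧ fvFm Pf ⊆ {0} ∧
  ∀ x : ℕ, (evalFm (Function.update e0 0 x) Pf ↔ PfShadow x)

/-- Application of a provability predicate to a (code) term: `PfP t`. -/
def PfApp (Pf : Fm) (t : Tm) : Fm := substFm 0 t Pf

/-! ### Auxiliary lemmas for `trans_fm_inject` -/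

lemma lookup_shape (e : List ℕ) : ∀ (n x : ℕ),
    lookup e n x = .DBVar x ∨ ∃ m, n ≤ m ∧ lookup e n x = .DBInd m := by
  induction e with
  | nil => intro n x; left; rfl
  | cons y ys ih =>
    intro n x
    by_cases h : x = y
    · exact Or.inr ⟨n, le_refl n, by simp [lookup, h]⟩
    · rcases ih (n+1) x with h' | ⟨m, hm, h'⟩
      · left; simpa [lookup, h] using h'
      · exact Or.inr ⟨m, by omega, by simpa [lookup, h] using h'⟩

lemma lookup_ind_inj : ∀ (e : List ℕ) (n x y m : ℕ),
    lookup e n x = .DBInd m → lookup e n y = .DBInd m → x = y := by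
  intro e
  induction e with
  | nil => intro n x y m hx; simp [lookup] at hx
  | cons z zs ih =>
    intro n x y m hx hy
    by_cases h1 : x = z <;> by_cases h2 : y = z
    · omega
    · simp [lookup, h1, h2] at hx hy
      rcases lookup_shape zs (n+1) y with h' | ⟨m', hm', h'⟩
      · rw [h'] at hy; simp at hy
      · rw [h'] at hy; cases hy; omega
    · simp [lookup, h1, h2] at hx hy
      rcases lookup_shape zs (n+1) x with h' | ⟨m', hm', h'⟩
      · rw [h'] at hx; simp at hx
      · rw [h'] at hx; cases hx; omega
    · simp [lookup, h1, h2] at hx hy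
      exact ih (n+1) x y m hx hy

lemma lookup_inj (e : List ℕ) (n x y : ℕ) (h : lookup e n x = lookup e n y) : x = y := by
  rcases lookup_shape e n x with hx | ⟨m, hm, hx⟩ <;>
    rcases lookup_shape e n y with hy | ⟨m', hm', hy⟩
  · rw [hx, hy] at h; cases h; rfl
  · rw [hx, hy] at h; simp at h
  · rw [hx, hy] at h; simp at h
  · rw [hx, hy] at h; cases h
    exact lookup_ind_inj e n x y m hx hy

lemma transTm_inj : ∀ (t u : Tm) (e : List ℕ), transTm e t = transTm e u → t = u := by
  intro t
  induction t with
  | Zero =>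
    intro u e h
    cases u with
    | Zero => rfl
    | Var k =>
      rcases lookup_shape e 0 k with h' | ⟨m, _, h'⟩ <;>
        simp [transTm, h'] at h
    | Eats t u => simp [transTm] at h
  | Var x =>
    intro u e h
    cases u with
    | Zero =>
      rcases lookup_shape e 0 x with h' | ⟨m, _, h'⟩ <;>
        simp [transTm, h'] at h
    | Var y => exact congrArg Tm.Var (lookup_inj e 0 x y h)
    | Eats t u =>
      rcases lookup_shape e 0 x with h' | ⟨m, _, h'⟩ <;>
        simp [transTm, h'] at h
  | Eats t1 t2 ih1 ih2 =>
    intro u e h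
    cases u with
    | Zero => simp [transTm] at h
    | Var y =>
      rcases lookup_shape e 0 y with h' | ⟨m, _, h'⟩ <;>
        simp [transTm, h'] at h
    | Eats u1 u2 =>
      simp only [transTm, DbTm.DBEats.injEq] at h
      rw [ih1 u1 e h.1, ih2 u2 e h.2]

lemma lookup_append_skip (x i k : ℕ) (hx : x ≠ k) (hxi : x ≠ i) :
    ∀ (e1 : List ℕ) (n : ℕ) (e2 : List ℕ),
    lookup (e1 ++ k :: e2) n x = lookup (e1 ++ i :: e2) n x := by
  intro e1
  induction e1 with
  | nil => intro n e2; simp [lookup, hx, hxi]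
  | cons z zs ih =>
    intro n e2
    by_cases h : x = z <;> simp [lookup, h, ih]

lemma lookup_append_mem (i k : ℕ) :
    ∀ (e1 : List ℕ), k ∉ e1 → i ∈ e1 → ∀ (n : ℕ) (e2 : List ℕ) (x : ℕ), x ≠ k →
    lookup (e1 ++ k :: e2) n x = lookup (e1 ++ i :: e2) n x := by
  intro e1
  induction e1 with
  | nil => intro _ hi; simp at hi
  | cons z zs ih =>
    intro hk hi n e2 x hx
    by_cases h : x = z
    · simp [lookup, h]
    · simp only [List.cons_append, lookup, if_neg h]
      by_cases hxi : x = i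
      · rw [hxi] at h hx ⊢
        have hiz : i ∈ zs := by
          rcases List.mem_cons.mp hi with h' | h'
          · exact absurd h' h
          · exact h'
        exact ih (fun hk' => hk (List.mem_cons_of_mem _ hk')) hiz (n+1) e2 i hx
      · exact lookup_append_skip x i k hx hxi zs (n+1) e2

lemma lookup_append_self (x : ℕ) : ∀ (e1 : List ℕ), x ∉ e1 → ∀ (n : ℕ) (e2 : List ℕ),
    lookup (e1 ++ x :: e2) n x = .DBInd (n + e1.length) := by
  intro e1
  induction e1 with
  | nil => intro _ n e2; simp [lookup]
  | cons z zs ih =>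
    intro hx n e2
    have hxz : x ≠ z := fun h => hx (by simp [h])
    have := ih (fun h => hx (List.mem_cons_of_mem _ h)) (n+1) e2
    calc lookup ((z :: zs) ++ x :: e2) n x = lookup (zs ++ x :: e2) (n+1) x := by
          simp [lookup, hxz]
      _ = .DBInd ((n+1) + zs.length) := this
      _ = .DBInd (n + (z :: zs).length) := by rw [List.length_cons]; congr 1; omega

lemma transTm_agree (i k : ℕ) (e1 e2 : List ℕ) (hk1 : k ∉ e1) (hi : i ∈ e1) :
    ∀ t : Tm, k ∉ fvTm t → transTm (e1 ++ k :: e2) t = transTm (e1 ++ i :: e2) t := by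
  intro t
  induction t with
  | Zero => intro _; rfl
  | Var x =>
    intro hx
    simp only [fvTm, Finset.mem_singleton] at hx
    exact lookup_append_mem i k e1 hk1 hi 0 e2 x (fun h => hx h.symm)
  | Eats t u ih1 ih2 =>
    intro h
    simp only [fvTm, Finset.mem_union, not_or] at h
    simp [transTm, ih1 h.1, ih2 h.2]

lemma transTm_subst (i k : ℕ) (e1 e2 : List ℕ) (hk1 : k ∉ e1) (hi1 : i ∉ e1) :
    ∀ t : Tm, k ∉ fvTm t →
    transTm (e1 ++ k :: e2) (substTm i (.Var k) t) = transTm (e1 ++ i :: e2) t := by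
  intro t
  induction t with
  | Zero => intro _; rfl
  | Var x =>
    intro hx
    simp only [fvTm, Finset.mem_singleton] at hx
    by_cases h : i = x
    · subst h
      simp only [substTm, if_pos rfl, ↓reduceIte, transTm]
      rw [lookup_append_self k e1 hk1 0 e2, lookup_append_self i e1 hi1 0 e2]
    · simp only [substTm, if_neg h, transTm]
      exact lookup_append_skip x i k (fun h' => hx h'.symm) (fun h' => h h'.symm) e1 0 e2
  | Eats t u ih1 ih2 =>
    intro h
    simp only [fvTm, Finset.mem_union, not_or] at h
    simp [substTm, transTm, ih1 h.1, ih2 h.2]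

lemma transFm_agree (i k : ℕ) :
    ∀ (A : Fm) (e1 e2 : List ℕ), k ∉ varsFm A → k ∉ e1 → i ∈ e1 →
    transFm (e1 ++ k :: e2) A = transFm (e1 ++ i :: e2) A := by
  intro A
  induction A with
  | Mem t u =>
    intro e1 e2 hA hk hi
    simp only [varsFm, Finset.mem_union, not_or] at hA
    simp [transFm, transTm_agree i k e1 e2 hk hi t hA.1,
      transTm_agree i k e1 e2 hk hi u hA.2]
  | Eq t u =>
    intro e1 e2 hA hk hi
    simp only [varsFm, Finset.mem_union, not_or] at hA
    simp [transFm, transTm_agree i k e1 e2 hk hi t hA.1,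
      transTm_agree i k e1 e2 hk hi u hA.2]
  | Disj A B ihA ihB =>
    intro e1 e2 hA hk hi
    simp only [varsFm, Finset.mem_union, not_or] at hA
    simp [transFm, ihA e1 e2 hA.1 hk hi, ihB e1 e2 hA.2 hk hi]
  | Neg A ihA =>
    intro e1 e2 hA hk hi
    simp [transFm, ihA e1 e2 hA hk hi]
  | Ex j A ihA =>
    intro e1 e2 hA hk hi
    simp only [varsFm, Finset.mem_insert, not_or] at hA
    have : transFm ((j :: e1) ++ k :: e2) A = transFm ((j :: e1) ++ i :: e2) A :=
      ihA (j :: e1) e2 hA.2 (by simp [hA.1, hk]) (List.mem_cons_of_mem _ hi)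
    simpa [transFm] using this

lemma transFm_subst (i k : ℕ) (hki : k ≠ i) :
    ∀ (A : Fm) (e1 e2 : List ℕ), k ∉ varsFm A → k ∉ e1 → i ∉ e1 →
    transFm (e1 ++ k :: e2) (substFm i (.Var k) A) = transFm (e1 ++ i :: e2) A := by
  intro A
  induction A with
  | Mem t u =>
    intro e1 e2 hA hk hi
    simp only [varsFm, Finset.mem_union, not_or] at hA
    simp [substFm, transFm, transTm_subst i k e1 e2 hk hi t hA.1,
      transTm_subst i k e1 e2 hk hi u hA.2]
  | Eq t u =>
    intro e1 e2 hA hk hi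
    simp only [varsFm, Finset.mem_union, not_or] at hA
    simp [substFm, transFm, transTm_subst i k e1 e2 hk hi t hA.1,
      transTm_subst i k e1 e2 hk hi u hA.2]
  | Disj A B ihA ihB =>
    intro e1 e2 hA hk hi
    simp only [varsFm, Finset.mem_union, not_or] at hA
    simp [substFm, transFm, ihA e1 e2 hA.1 hk hi, ihB e1 e2 hA.2 hk hi]
  | Neg A ihA =>
    intro e1 e2 hA hk hi
    simp [substFm, transFm, ihA e1 e2 hA hk hi]
  | Ex j A ihA =>
    intro e1 e2 hA hk hi
    simp only [varsFm, Finset.mem_insert, not_or] at hA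
    by_cases h : i = j
    · subst h
      simp only [substFm, if_pos rfl, ↓reduceIte, transFm]
      have : transFm ((i :: e1) ++ k :: e2) A = transFm ((i :: e1) ++ i :: e2) A :=
        transFm_agree i k A (i :: e1) e2 hA.2 (by simp [hA.1, hk]) (by simp)
      simpa using this
    · simp only [substFm, if_neg h, transFm]
      have : transFm ((j :: e1) ++ k :: e2) (substFm i (.Var k) A) =
          transFm ((j :: e1) ++ i :: e2) A :=
        ihA (j :: e1) e2 hA.2 (by simp [hA.1, hk]) (by simp [h, hi])
      simpa using this

/-- Size of a formula. -/
def szFm : Fm → ℕ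
  | .Mem _ _ => 1
  | .Eq _ _ => 1
  | .Disj A B => szFm A + szFm B + 1
  | .Neg A => szFm A + 1
  | .Ex _ A => szFm A + 1

lemma szFm_pos : ∀ A : Fm, 1 ≤ szFm A := by
  intro A; cases A <;> simp [szFm]

lemma szFm_subst (i : ℕ) (x : Tm) : ∀ A, szFm (substFm i x A) = szFm A := by
  intro A
  induction A with
  | Mem t u => rfl
  | Eq t u => rfl
  | Disj A B ihA ihB => simp [substFm, szFm, ihA, ihB]
  | Neg A ihA => simp [substFm, szFm, ihA]
  | Ex j A ihA =>
    by_cases h : i = j <;> simp [substFm, h, szFm, ihA]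

lemma trans_forward : ∀ (n : ℕ) (A B : Fm) (e : List ℕ), szFm A ≤ n →
    transFm e A = transFm e B → AEq A B := by
  intro n
  induction n with
  | zero =>
    intro A B e h
    have := szFm_pos A; omega
  | succ n ih =>
    intro A B e hsz h
    cases A with
    | Mem t u =>
      cases B <;> simp only [transFm, DbFm.DBMem.injEq, reduceCtorEq] at h
      case Mem t' u' =>
        rw [transTm_inj t t' e h.1, transTm_inj u u' e h.2]
        exact AEq.mem t' u'
    | Eq t u =>
      cases B <;> simp only [transFm, DbFm.DBEq.injEq, reduceCtorEq] at h
      case Eq t' u' =>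
        rw [transTm_inj t t' e h.1, transTm_inj u u' e h.2]
        exact AEq.eq t' u'
    | Disj A1 A2 =>
      cases B <;> simp only [transFm, DbFm.DBDisj.injEq, reduceCtorEq] at h
      case Disj B1 B2 =>
        have h1 := szFm_pos A1
        have h2 := szFm_pos A2
        simp only [szFm] at hsz
        exact AEq.disj (ih A1 B1 e (by omega) h.1) (ih A2 B2 e (by omega) h.2)
    | Neg A1 =>
      cases B <;> simp only [transFm, DbFm.DBNeg.injEq, reduceCtorEq] at h
      case Neg B1 =>
        simp only [szFm] at hsz
        exact AEq.neg (ih A1 B1 e (by omega) h)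
    | Ex i A1 =>
      cases B <;> simp only [transFm, DbFm.DBEx.injEq, reduceCtorEq] at h
      case Ex j B1 =>
        simp only [szFm] at hsz
        refine AEq.ex i j (fun k hkA hkB hki hkj => ?_)
        refine ih (substFm i (.Var k) A1) (substFm j (.Var k) B1) (k :: e)
          (by rw [szFm_subst]; omega) ?_
        have e1 : transFm ([] ++ k :: e) (substFm i (.Var k) A1) =
            transFm ([] ++ i :: e) A1 :=
          transFm_subst i k hki A1 [] e hkA (by simp) (by simp)
        have e2 : transFm ([] ++ k :: e) (substFm j (.Var k) B1) =
            transFm ([] ++ j :: e) B1 :=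
          transFm_subst j k hkj B1 [] e hkB (by simp) (by simp)
        simp only [List.nil_append] at e1 e2
        rw [e1, e2]
        exact h

lemma trans_backward : ∀ {A B : Fm}, AEq A B → ∀ e, transFm e A = transFm e B := by
  intro A B h
  induction h with
  | mem t u => intro e; rfl
  | eq t u => intro e; rfl
  | disj _ _ ih1 ih2 => intro e; simp [transFm, ih1 e, ih2 e]
  | neg _ ih => intro e; simp [transFm, ih e]
  | @ex A B i j hk ih =>
    intro e
    set m := (varsFm A ∪ varsFm B).sup id with hm
    set k := m + i + j + 1 with hkdef
    have hkA : k ∉ varsFm A := by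
      intro hmem
      have := Finset.le_sup (f := id) (Finset.mem_union_left (varsFm B) hmem)
      simp only [id] at this; omega
    have hkB : k ∉ varsFm B := by
      intro hmem
      have := Finset.le_sup (f := id) (Finset.mem_union_right (varsFm A) hmem)
      simp only [id] at this; omega
    have hki : k ≠ i := by omega
    have hkj : k ≠ j := by omega
    have e1 : transFm ([] ++ k :: e) (substFm i (.Var k) A) =
        transFm ([] ++ i :: e) A :=
      transFm_subst i k hki A [] e hkA (by simp) (by simp)
    have e2 : transFm ([] ++ k :: e) (substFm j (.Var k) B) =
        transFm ([] ++ j :: e) B :=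
      transFm_subst j k hkj B [] e hkB (by simp) (by simp)
    simp only [List.nil_append] at e1 e2
    simp only [transFm]
    rw [← e1, ← e2, ih k hkA hkB hki hkj (k :: e)]

/-- Translation to de Bruijn form is injective up to α-equivalence. -/
theorem trans_fm_inject (A B : Fm) :
    transFm [] A = transFm [] B ↔ AEq A B :=
  ⟨fun h => trans_forward (szFm A) A B [] (le_refl _) h,
   fun h => trans_backward h []⟩
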